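/- Equipartition for squared radial trigonometric multipliers: for every integrable function f : ℝ^d → ℂ, ∫_{ℝ^d} cos²(t |ξ|) f(ξ) dξ → (1/2) ∫_{ℝ^d} f(ξ) dξ and ∫_{ℝ^d} sin²(t |ξ|) f(ξ) dξ → (1/2) ∫_{ℝ^d} f(ξ) dξ as |t| → ∞ (t real). -/

import Mathlib

open MeasureTheory Filter
open Complex Set Metric Real

noncomputable section

lemma radial_RL (d : ℕ) (hd : 1 ≤ d) (f : EuclideanSpace ℝ (Fin d) → ℂ)
    (hf : Integrable f) :
    Tendsto (fun t : ℝ => ∫ ξ, Complex.exp ((t * ‖ξ‖ : ℝ) * Complex.I) * f ξ)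
      (cocompact ℝ) (nhds 0) := by
  haveI : Nontrivial (EuclideanSpace ℝ (Fin d)) := by
    have : Nonempty (Fin d) := Fin.pos_iff_nonempty.mp hd
    infer_instance
  have hdim : Module.finrank ℝ (EuclideanSpace ℝ (Fin d)) = d := finrank_euclideanSpace_fin
  set σ := (volume : Measure (EuclideanSpace ℝ (Fin d))).toSphere with hσ
  set τ := Measure.volumeIoiPow (d - 1) with hτ
  have hmp : MeasurePreserving (homeomorphUnitSphereProd (EuclideanSpace ℝ (Fin d)))
      ((volume : Measure (EuclideanSpace ℝ (Fin d))).comap Subtype.val) (σ.prod τ) := by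
    have := (volume : Measure (EuclideanSpace ℝ (Fin d))).measurePreserving_homeomorphUnitSphereProd
    rwa [hdim] at this
  have ms : MeasurableSet ({0}ᶜ : Set (EuclideanSpace ℝ (Fin d))) :=
    (measurableSet_singleton 0).compl
  set Hfun : ℝ → ℂ :=
    fun r => ∫ ω : sphere (0 : EuclideanSpace ℝ (Fin d)) 1, f (r • (ω : EuclideanSpace ℝ (Fin d))) ∂σ
    with hHfun
  set h : ℝ → ℂ :=
    (Ioi (0 : ℝ)).indicator (fun r => Real.toNNReal (r ^ (d - 1)) • Hfun r) with hh
  -- integrability of the transported functions, for all t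
  have hgt : ∀ t : ℝ, Integrable (fun ξ => Complex.exp ((t * ‖ξ‖ : ℝ) * Complex.I) * f ξ) := by
    intro t
    refine Integrable.bdd_mul (f := fun ξ => Complex.exp ((t * ‖ξ‖ : ℝ) * Complex.I)) hf
      (c := 1) ?_ (Filter.Eventually.of_forall fun ξ => ?_)
    · exact (Complex.continuous_exp.comp
        ((Complex.continuous_ofReal.comp (continuous_const.mul continuous_norm)).mul
          continuous_const)).aestronglyMeasurable
    · rw [Complex.norm_exp_ofReal_mul_I]
  have hcomap : ∀ t : ℝ, Integrable
      ((fun ξ => Complex.exp ((t * ‖ξ‖ : ℝ) * Complex.I) * f ξ) ∘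
        (Subtype.val : ({0}ᶜ : Set (EuclideanSpace ℝ (Fin d))) → EuclideanSpace ℝ (Fin d)))
      (Measure.comap Subtype.val volume) := by
    intro t
    rw [← (MeasurableEmbedding.subtype_coe ms).integrable_map_iff, map_comap_subtype_coe ms]
    exact (hgt t).restrict
  have hGt : ∀ t : ℝ, Integrable
      (fun p : sphere (0 : EuclideanSpace ℝ (Fin d)) 1 × Ioi (0 : ℝ) =>
        Complex.exp ((t * (p.2 : ℝ) : ℝ) * Complex.I) *
          f ((p.2 : ℝ) • (p.1 : EuclideanSpace ℝ (Fin d))))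
      (σ.prod τ) := by
    intro t
    rw [← hmp.integrable_comp_emb (Homeomorph.measurableEmbedding _)]
    have heq : (fun p : sphere (0 : EuclideanSpace ℝ (Fin d)) 1 × Ioi (0 : ℝ) =>
        Complex.exp ((t * (p.2 : ℝ) : ℝ) * Complex.I) *
          f ((p.2 : ℝ) • (p.1 : EuclideanSpace ℝ (Fin d)))) ∘
        (homeomorphUnitSphereProd (EuclideanSpace ℝ (Fin d))) =
        (fun ξ => Complex.exp ((t * ‖ξ‖ : ℝ) * Complex.I) * f ξ) ∘ Subtype.val := by
      funext x
      have hx : (x : EuclideanSpace ℝ (Fin d)) ≠ 0 := x.2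
      simp only [Function.comp_apply, homeomorphUnitSphereProd_apply_snd_coe,
        homeomorphUnitSphereProd_apply_fst_coe, smul_inv_smul₀ (norm_ne_zero_iff.2 hx)]
    rw [heq]
    exact hcomap t
  -- the key identity
  have key : ∀ t : ℝ,
      (∫ ξ, Complex.exp ((t * ‖ξ‖ : ℝ) * Complex.I) * f ξ) =
      ∫ r : ℝ, Complex.exp ((t * r : ℝ) * Complex.I) * h r := by
    intro t
    calc
      (∫ ξ, Complex.exp ((t * ‖ξ‖ : ℝ) * Complex.I) * f ξ)
          = ∫ x : ({0}ᶜ : Set (EuclideanSpace ℝ (Fin d))),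
              Complex.exp ((t * ‖(x : EuclideanSpace ℝ (Fin d))‖ : ℝ) * Complex.I) * f x
            ∂(Measure.comap Subtype.val volume) := by
        have := integral_subtype_comap (μ := volume) ms
          (fun ξ : EuclideanSpace ℝ (Fin d) => Complex.exp ((t * ‖ξ‖ : ℝ) * Complex.I) * f ξ)
        rw [MeasureTheory.restrict_compl_singleton] at this
        exact this.symm
      _ = ∫ p : sphere (0 : EuclideanSpace ℝ (Fin d)) 1 × Ioi (0 : ℝ),
            Complex.exp ((t * (p.2 : ℝ) : ℝ) * Complex.I) *
              f ((p.2 : ℝ) • (p.1 : EuclideanSpace ℝ (Fin d))) ∂(σ.prod τ) := by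
        rw [← hmp.integral_comp (Homeomorph.measurableEmbedding _)
          (fun p : sphere (0 : EuclideanSpace ℝ (Fin d)) 1 × Ioi (0 : ℝ) =>
            Complex.exp ((t * (p.2 : ℝ) : ℝ) * Complex.I) *
              f ((p.2 : ℝ) • (p.1 : EuclideanSpace ℝ (Fin d))))]
        refine integral_congr_ae (Eventually.of_forall fun x => ?_)
        have hx : (x : EuclideanSpace ℝ (Fin d)) ≠ 0 := x.2
        simp only [homeomorphUnitSphereProd_apply_snd_coe,
          homeomorphUnitSphereProd_apply_fst_coe, smul_inv_smul₀ (norm_ne_zero_iff.2 hx)]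
      _ = ∫ r : Ioi (0 : ℝ), ∫ ω : sphere (0 : EuclideanSpace ℝ (Fin d)) 1,
            Complex.exp ((t * (r : ℝ) : ℝ) * Complex.I) *
              f ((r : ℝ) • (ω : EuclideanSpace ℝ (Fin d))) ∂σ ∂τ :=
        integral_prod_symm _ (hGt t)
      _ = ∫ r : Ioi (0 : ℝ), Complex.exp ((t * (r : ℝ) : ℝ) * Complex.I) * Hfun (r : ℝ) ∂τ := by
        refine integral_congr_ae (Eventually.of_forall fun r => ?_)
        simp only [hHfun]
        exact integral_const_mul _ _
      _ = ∫ r : Ioi (0 : ℝ), Real.toNNReal ((r : ℝ) ^ (d - 1)) •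
            (Complex.exp ((t * (r : ℝ) : ℝ) * Complex.I) * Hfun (r : ℝ))
            ∂(Measure.comap Subtype.val volume) := by
        rw [hτ, Measure.volumeIoiPow]
        simp only [ENNReal.ofReal]
        rw [integral_withDensity_eq_integral_smul
          ((measurable_subtype_coe.pow_const _).real_toNNReal)]
      _ = ∫ r in Ioi (0 : ℝ), Real.toNNReal (r ^ (d - 1)) •
            (Complex.exp ((t * r : ℝ) * Complex.I) * Hfun r) :=
        integral_subtype_comap measurableSet_Ioi
          (fun r : ℝ => Real.toNNReal (r ^ (d - 1)) •
            (Complex.exp ((t * r : ℝ) * Complex.I) * Hfun r))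
      _ = ∫ r : ℝ, Complex.exp ((t * r : ℝ) * Complex.I) * h r := by
        rw [← integral_indicator measurableSet_Ioi]
        congr 1
        funext r
        by_cases hr : r ∈ Ioi (0 : ℝ)
        · rw [indicator_of_mem hr, hh, indicator_of_mem hr, mul_smul_comm]
        · rw [indicator_of_notMem hr, hh, indicator_of_notMem hr, mul_zero]
  -- h is integrable
  have hHτ : Integrable (fun r : Ioi (0 : ℝ) => Hfun (r : ℝ)) τ := by
    have h0 := (hGt 0).integral_prod_right
    simpa [hHfun] using h0
  have hint : Integrable h := by
    rw [hh]
    refine IntegrableOn.integrable_indicator ?_ measurableSet_Ioi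
    have hsub : Integrable ((fun r : ℝ => Real.toNNReal (r ^ (d - 1)) • Hfun r) ∘
        (Subtype.val : Ioi (0:ℝ) → ℝ)) (Measure.comap Subtype.val volume) := by
      have h1 := (integrable_withDensity_iff_integrable_smul
        (μ := Measure.comap (Subtype.val : Ioi (0:ℝ) → ℝ) volume)
        ((measurable_subtype_coe.pow_const (d - 1)).real_toNNReal)
        (g := fun r : Ioi (0 : ℝ) => Hfun (r : ℝ))).mp ?_
      · exact h1
      · rw [hτ, Measure.volumeIoiPow] at hHτ
        simpa only [ENNReal.ofReal] using hHτ
    rwa [← (MeasurableEmbedding.subtype_coe measurableSet_Ioi).integrable_map_iff,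
      map_comap_subtype_coe measurableSet_Ioi] at hsub
  -- Riemann-Lebesgue on ℝ
  have hRL := Real.tendsto_integral_exp_smul_cocompact h
  have hπ : (2 : ℝ) * π ≠ 0 := by positivity
  have hφ : Tendsto (fun t : ℝ => t * (-(2 * π)⁻¹)) (cocompact ℝ) (cocompact ℝ) :=
    Filter.tendsto_cocompact_mul_right₀ (by
      simp only [neg_ne_zero, ne_eq, inv_eq_zero]
      exact hπ)
  refine Tendsto.congr (fun t => ?_) (hRL.comp hφ)
  simp only [Function.comp_apply]
  rw [key t]
  congr 1
  funext v
  rw [Circle.smul_def, Real.fourierChar_apply,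
    show 2 * π * (-(v * (t * (-(2 * π)⁻¹)))) = t * v by field_simp,
    smul_eq_mul]

lemma exp_mul_int (d : ℕ) (f : EuclideanSpace ℝ (Fin d) → ℂ) (hf : Integrable f) (t : ℝ) :
    Integrable (fun ξ => Complex.exp ((t * ‖ξ‖ : ℝ) * Complex.I) * f ξ) := by
  refine Integrable.bdd_mul (f := fun ξ => Complex.exp ((t * ‖ξ‖ : ℝ) * Complex.I)) hf
    (c := 1) ?_ (Filter.Eventually.of_forall fun ξ => ?_)
  · exact (Complex.continuous_exp.comp
      ((Complex.continuous_ofReal.comp (continuous_const.mul continuous_norm)).mul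
        continuous_const)).aestronglyMeasurable
  · rw [Complex.norm_exp_ofReal_mul_I]

lemma radial_cos_RL (d : ℕ) (hd : 1 ≤ d) (f : EuclideanSpace ℝ (Fin d) → ℂ)
    (hf : Integrable f) :
    Tendsto (fun t : ℝ => ∫ ξ, ((Real.cos (t * ‖ξ‖) : ℝ) : ℂ) * f ξ)
      (cocompact ℝ) (nhds 0) := by
  have h1 := radial_RL d hd f hf
  have hneg : Tendsto (fun t : ℝ => -t) (cocompact ℝ) (cocompact ℝ) := by
    have := Filter.tendsto_cocompact_mul_left₀ (a := (-1 : ℝ)) (by norm_num)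
    simpa [neg_one_mul] using this
  have h2 := h1.comp hneg
  simp only [Function.comp_def] at h2
  have hsum := (h1.add h2).div_const (2 : ℂ)
  rw [add_zero, zero_div] at hsum
  refine Tendsto.congr (fun t => ?_) hsum
  calc ((∫ ξ, Complex.exp ((t * ‖ξ‖ : ℝ) * Complex.I) * f ξ) +
        ∫ ξ, Complex.exp ((-t * ‖ξ‖ : ℝ) * Complex.I) * f ξ) / 2
      = (∫ ξ, (Complex.exp ((t * ‖ξ‖ : ℝ) * Complex.I) * f ξ +
          Complex.exp ((-t * ‖ξ‖ : ℝ) * Complex.I) * f ξ)) / 2 := by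
        rw [integral_add (exp_mul_int d f hf t) (exp_mul_int d f hf (-t))]
    _ = ∫ ξ, (Complex.exp ((t * ‖ξ‖ : ℝ) * Complex.I) * f ξ +
          Complex.exp ((-t * ‖ξ‖ : ℝ) * Complex.I) * f ξ) / 2 := (integral_div _ _).symm
    _ = ∫ ξ, ((Real.cos (t * ‖ξ‖) : ℝ) : ℂ) * f ξ := by
        refine integral_congr_ae (Filter.Eventually.of_forall fun ξ => ?_)
        have hc : ((Real.cos (t * ‖ξ‖) : ℝ) : ℂ) =
            (Complex.exp ((t * ‖ξ‖ : ℝ) * Complex.I) +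
              Complex.exp ((-t * ‖ξ‖ : ℝ) * Complex.I)) / 2 := by
          rw [Complex.ofReal_cos]
          have : Complex.cos ((t * ‖ξ‖ : ℝ) : ℂ) =
              (Complex.exp (((t * ‖ξ‖ : ℝ) : ℂ) * Complex.I) +
                Complex.exp (-((t * ‖ξ‖ : ℝ) : ℂ) * Complex.I)) / 2 := rfl
          rw [this]
          push_cast
          ring_nf
        simp only [hc]
        ring

/-- **Equipartition for squared radial trigonometric multipliers.** For every integrable
`f : ℝ^d → ℂ`, `∫ cos²(t|ξ|) f ξ dξ → (1/2) ∫ f` and `∫ sin²(t|ξ|) f ξ dξ → (1/2) ∫ f`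
as `|t| → ∞`. -/
theorem radial_trig_sq_equipartition (d : ℕ) (hd : 1 ≤ d)
    (f : EuclideanSpace ℝ (Fin d) → ℂ) (hf : Integrable f) :
    Tendsto (fun t : ℝ => ∫ ξ, ((Real.cos (t * ‖ξ‖)) ^ 2 : ℂ) * f ξ)
      (cocompact ℝ) (nhds ((1 / 2 : ℂ) * ∫ ξ, f ξ)) ∧
    Tendsto (fun t : ℝ => ∫ ξ, ((Real.sin (t * ‖ξ‖)) ^ 2 : ℂ) * f ξ)
      (cocompact ℝ) (nhds ((1 / 2 : ℂ) * ∫ ξ, f ξ)) := by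
  have hC := radial_cos_RL d hd f hf
  have h2t : Tendsto (fun t : ℝ => 2 * t) (cocompact ℝ) (cocompact ℝ) :=
    Filter.tendsto_cocompact_mul_left₀ two_ne_zero
  have hcos2 := hC.comp h2t
  simp only [Function.comp_def] at hcos2
  -- hcos2 : Tendsto (fun t => ∫ ξ, ↑(Real.cos (2 * t * ‖ξ‖)) * f ξ) (cocompact ℝ) (nhds 0)
  have hcint : ∀ t : ℝ, Integrable (fun ξ : EuclideanSpace ℝ (Fin d) =>
      ((Real.cos (2 * t * ‖ξ‖) : ℝ) : ℂ) * f ξ) := by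
    intro t
    refine Integrable.bdd_mul (f := fun ξ : EuclideanSpace ℝ (Fin d) =>
      ((Real.cos (2 * t * ‖ξ‖) : ℝ) : ℂ)) hf (c := 1) ?_ (Filter.Eventually.of_forall fun ξ => ?_)
    · exact (Complex.continuous_ofReal.comp
        (Real.continuous_cos.comp (continuous_const.mul continuous_norm))).aestronglyMeasurable
    · rw [Complex.norm_real, Real.norm_eq_abs]
      exact Real.abs_cos_le_one _
  have keyc : ∀ t : ℝ, (∫ ξ, ((Real.cos (t * ‖ξ‖)) ^ 2 : ℂ) * f ξ) =
      (1 / 2 : ℂ) * (∫ ξ, f ξ) +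
        (1 / 2 : ℂ) * ∫ ξ, ((Real.cos (2 * t * ‖ξ‖) : ℝ) : ℂ) * f ξ := by
    intro t
    rw [← integral_const_mul, ← integral_const_mul,
      ← integral_add (hf.const_mul _) ((hcint t).const_mul _)]
    refine integral_congr_ae (Filter.Eventually.of_forall fun ξ => ?_)
    have h1 : ((Real.cos (t * ‖ξ‖) : ℝ) : ℂ) ^ 2 =
        1 / 2 + ((Real.cos (2 * t * ‖ξ‖) : ℝ) : ℂ) / 2 := by
      rw [← Complex.ofReal_pow, Real.cos_sq, ← mul_assoc]
      push_cast
      ring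
    simp only [h1]
    ring
  have keys : ∀ t : ℝ, (∫ ξ, ((Real.sin (t * ‖ξ‖)) ^ 2 : ℂ) * f ξ) =
      (1 / 2 : ℂ) * (∫ ξ, f ξ) -
        (1 / 2 : ℂ) * ∫ ξ, ((Real.cos (2 * t * ‖ξ‖) : ℝ) : ℂ) * f ξ := by
    intro t
    rw [← integral_const_mul, ← integral_const_mul,
      ← integral_sub (hf.const_mul _) ((hcint t).const_mul _)]
    refine integral_congr_ae (Filter.Eventually.of_forall fun ξ => ?_)
    have h1 : ((Real.sin (t * ‖ξ‖) : ℝ) : ℂ) ^ 2 =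
        1 / 2 - ((Real.cos (2 * t * ‖ξ‖) : ℝ) : ℂ) / 2 := by
      rw [← Complex.ofReal_pow, Real.sin_sq_eq_half_sub, ← mul_assoc]
      push_cast
      ring
    simp only [h1]
    ring
  constructor
  · have := (tendsto_const_nhds
      (x := (1 / 2 : ℂ) * ∫ ξ, f ξ) (f := Filter.cocompact ℝ)).add (hcos2.const_mul (1 / 2 : ℂ))
    rw [mul_zero, add_zero] at this
    exact Tendsto.congr (fun t => (keyc t).symm) this
  · have := (tendsto_const_nhds
      (x := (1 / 2 : ℂ) * ∫ ξ, f ξ) (f := Filter.cocompact ℝ)).sub (hcos2.const_mul (1 / 2 : ℂ))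
    rw [mul_zero, sub_zero] at this
    exact Tendsto.congr (fun t => (keys t).symm) this
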